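/- Let E be an oriented n-dimensional real inner product space, 0 < k < n−1, and let {v_1, …, v_k, ω_1, …, ω_{n−k}} be a basis of E. For a ∈ {1, …, n−k}, define u_a = ⋆( (⋀_{i≠a} ω_i) ∧ v_1 ∧ ⋯ ∧ v_k ). Then the vectors u_1, …, u_{n−k} are linearly independent. -/

import Mathlib

noncomputable section

open ExteriorAlgebra Module

/-- The data of the induced inner products on the exterior powers of an oriented
`n`-dimensional real inner product space `E`, together with the Hodge star operators,
characterized by their defining properties. -/
structure HodgeData (E : Type*) [NormedAddCommGroup E] [InnerProductSpace ℝ E] (n : ℕ) where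
  /-- an orthonormal basis fixing the orientation -/
  e : OrthonormalBasis (Fin n) ℝ E
  /-- the induced inner product on the exterior algebra (degreewise, the inner product
  `⟨·,·⟩_p` on `Λ^p E`) -/
  B : ExteriorAlgebra ℝ E →ₗ[ℝ] ExteriorAlgebra ℝ E →ₗ[ℝ] ℝ
  B_symm : ∀ x y, B x y = B y x
  /-- on decomposable `p`-vectors, the inner product is the Gram determinant -/
  B_gram : ∀ (p : ℕ) (v w : Fin p → E),
    B (ExteriorAlgebra.ιMulti ℝ p v) (ExteriorAlgebra.ιMulti ℝ p w)
      = (Matrix.of fun i j => (inner ℝ (v i) (w j) : ℝ)).det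
  /-- the Hodge star operator `⋆ : Λ^p E → Λ^{n-p} E` (for each `p`) -/
  star : ℕ → ExteriorAlgebra ℝ E →ₗ[ℝ] ExteriorAlgebra ℝ E
  star_mem : ∀ (p : ℕ) (ν : ExteriorAlgebra ℝ E), ν ∈ ⋀[ℝ]^p E →
    star p ν ∈ ⋀[ℝ]^(n - p) E
  /-- the defining property of the Hodge star: `⟨⋆ν, ω⟩ μ = ν ∧ ω` where
  `μ = e_1 ∧ ⋯ ∧ e_n` is the unit volume element -/
  star_eq : ∀ (p : ℕ) (ν ω : ExteriorAlgebra ℝ E), ν ∈ ⋀[ℝ]^p E → ω ∈ ⋀[ℝ]^(n - p) E →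
    (B (star p ν) ω) • (ExteriorAlgebra.ιMulti ℝ n ⇑e) = ν * ω

namespace HodgeData

variable {E : Type*} [NormedAddCommGroup E] [InnerProductSpace ℝ E] {n : ℕ}

/-- the unit volume element `μ = e_1 ∧ ⋯ ∧ e_n` -/
def vol (H : HodgeData E n) : ExteriorAlgebra ℝ E := ExteriorAlgebra.ιMulti ℝ n ⇑H.e

/-- the norm on the exterior powers induced by the inner product -/
def norm (H : HodgeData E n) (x : ExteriorAlgebra ℝ E) : ℝ := Real.sqrt (H.B x x)

end HodgeData

private lemma ιMulti_snoc' {R M : Type*} [CommRing R] [AddCommGroup M] [Module R M]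
    (n : ℕ) (f : Fin n → M) (x : M) :
    ExteriorAlgebra.ιMulti R (n + 1) (Fin.snoc f x) =
      ExteriorAlgebra.ιMulti R n f * ExteriorAlgebra.ι R x := by
  rw [ExteriorAlgebra.ιMulti_apply, ExteriorAlgebra.ιMulti_apply, List.ofFn_succ',
    List.concat_eq_append, List.prod_append]
  simp [Fin.snoc_castSucc, Fin.snoc_last]

/-- The vectors u_a = ⋆((⋀_{i≠a} ω_i) ∧ v_1 ∧ ⋯ ∧ v_k), a = 1,…,n−k, are linearly
independent (here n = k + (m+2), so 0 < k < n − 1). -/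
theorem stmt5 {E : Type*} [NormedAddCommGroup E] [InnerProductSpace ℝ E] (k m : ℕ)
    (hk : 0 < k) (H : HodgeData E (k + (m + 2)))
    (v : Fin k → E) (ω : Fin (m + 2) → E)
    (hindep : LinearIndependent ℝ (Fin.append v ω))
    (hspan : Submodule.span ℝ (Set.range (Fin.append v ω)) = ⊤)
    (u : Fin (m + 2) → E)
    (hu : ∀ a, ExteriorAlgebra.ι ℝ (u a)
      = H.star (m + 1 + k) (ExteriorAlgebra.ιMulti ℝ (m + 1 + k)
          (Fin.append (fun i => ω (a.succAbove i)) v))) :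
    LinearIndependent ℝ u := by
  classical
  have hb' : ⊤ ≤ Submodule.span ℝ (Set.range (Fin.append v ω)) := hspan.ge
  let bE : Basis (Fin (k + (m + 2))) ℝ E := Basis.mk hindep hb'
  have hpn : m + 1 + k + 1 = k + (m + 2) := by omega
  -- the family of (n-1)-tuples and their snoc extensions
  set f : Fin (m + 2) → Fin (m + 1 + k) → E :=
    fun t => Fin.append (fun i => ω (t.succAbove i)) v with hf
  rw [Fintype.linearIndependent_iff]
  intro c hc a
  -- the linear functional given by the determinant w.r.t. bE
  let D : ∀ i, E [⋀^Fin i]→ₗ[ℝ] ℝ := fun i =>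
    if h : i = k + (m + 2) then (bE.det).domDomCongr (finCongr h.symm) else 0
  let F := ExteriorAlgebra.liftAlternating (R := ℝ) (M := E) D
  set g : Fin (m + 2) → Fin (m + 1 + k + 1) → E := fun t => Fin.snoc (f t) (ω a) with hg
  -- membership facts
  have hmemν : ∀ t, ExteriorAlgebra.ιMulti ℝ (m + 1 + k) (f t) ∈ ⋀[ℝ]^(m + 1 + k) E :=
    fun t => ExteriorAlgebra.ιMulti_range ℝ (m + 1 + k) ⟨f t, rfl⟩
  have hmemω : ExteriorAlgebra.ι ℝ (ω a) ∈ ⋀[ℝ]^(k + (m + 2) - (m + 1 + k)) E := by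
    have e1 : k + (m + 2) - (m + 1 + k) = 1 := by omega
    rw [e1]
    show ExteriorAlgebra.ι ℝ (ω a) ∈ LinearMap.range (ExteriorAlgebra.ι ℝ (M := E)) ^ 1
    rw [pow_one]
    exact LinearMap.mem_range_self _ _
  have key : ∀ t, (H.B (H.star (m + 1 + k) (ExteriorAlgebra.ιMulti ℝ (m + 1 + k) (f t)))
        (ExteriorAlgebra.ι ℝ (ω a))) • (ExteriorAlgebra.ιMulti ℝ (k + (m + 2)) ⇑H.e)
      = ExteriorAlgebra.ιMulti ℝ (m + 1 + k + 1) (g t) := fun t =>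
    (H.star_eq (m + 1 + k) _ _ (hmemν t) hmemω).trans (ιMulti_snoc' _ _ _).symm
  have h0 : ∑ t, c t • H.star (m + 1 + k) (ExteriorAlgebra.ιMulti ℝ (m + 1 + k) (f t)) = 0 := by
    have h := congrArg (fun x => ExteriorAlgebra.ι ℝ (M := E) x) hc
    simpa only [map_sum, map_smul, map_zero, hu] using h
  have h1 : ∑ t, c t • ExteriorAlgebra.ιMulti ℝ (m + 1 + k + 1) (g t) = 0 := by
    have h2 : ∑ t, c t • ExteriorAlgebra.ιMulti ℝ (m + 1 + k + 1) (g t)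
        = (H.B (∑ t, c t • H.star (m + 1 + k) (ExteriorAlgebra.ιMulti ℝ (m + 1 + k) (f t)))
            (ExteriorAlgebra.ι ℝ (ω a))) • (ExteriorAlgebra.ιMulti ℝ (k + (m + 2)) ⇑H.e) := by
      rw [map_sum, LinearMap.sum_apply, Finset.sum_smul]
      refine Finset.sum_congr rfl fun t _ => ?_
      rw [map_smul, LinearMap.smul_apply, smul_eq_mul, ← smul_smul, key t]
    rw [h2, h0]
    simp
  have h3 : ∑ t, c t • bE.det ((g t) ∘ (finCongr hpn.symm)) = 0 := by
    have h := congrArg F h1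
    simp only [map_sum, map_zero, map_smul, F,
      ExteriorAlgebra.liftAlternating_apply_ιMulti] at h
    simpa only [D, dif_pos hpn, AlternatingMap.domDomCongr_apply] using h
  -- vanishing of the terms with t ≠ a
  have hzero : ∀ t, t ≠ a → bE.det ((g t) ∘ (finCongr hpn.symm)) = 0 := by
    intro t ht
    obtain ⟨i, hi⟩ := Fin.exists_succAbove_eq (Ne.symm ht)
    have hcc : ∀ x : Fin (m + 1 + k + 1), (finCongr hpn.symm) ((finCongr hpn) x) = x :=
      fun x => by apply Fin.ext; simp
    refine AlternatingMap.map_eq_zero_of_eq _ _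
      (i := finCongr hpn (Fin.castSucc (Fin.castAdd k i)))
      (j := finCongr hpn (Fin.last (m + 1 + k))) ?_ ?_
    · simp only [Function.comp_apply, hcc]
      simp [hg, hf, Fin.snoc_castSucc, Fin.snoc_last, Fin.append_left, hi]
    · have := i.isLt
      simp only [ne_eq, Fin.ext_iff, finCongr_apply_coe, Fin.coe_castSucc, Fin.coe_castAdd,
        Fin.val_last]
      omega
  -- the term with t = a is (up to sign) the determinant of the basis, hence nonzero
  have hτ : ∃ σ : Equiv.Perm (Fin (k + (m + 2))), (g a) ∘ (finCongr hpn.symm) = ⇑bE ∘ σ := by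
    set A : Fin (m + 1) → Fin (k + (m + 2)) := fun i => Fin.natAdd k (a.succAbove i) with hA
    set B' : Fin k → Fin (k + (m + 2)) := fun j => Fin.castAdd (m + 2) j with hB'
    set τ' : Fin (m + 1 + k + 1) → Fin (k + (m + 2)) :=
      Fin.snoc (Fin.append A B') (Fin.natAdd k a) with hτ'
    have hcomp : ⇑bE ∘ τ' = g a := by
      funext x
      refine Fin.lastCases ?_ (fun y => ?_) x
      · simp [hτ', hg, Fin.snoc_last, bE, Basis.coe_mk, Fin.append_right]
      · simp only [Function.comp_apply, hτ', Fin.snoc_castSucc, hg]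
        refine Fin.addCases (fun i => ?_) (fun j => ?_) y
        · simp [hA, Fin.append_left, bE, Basis.coe_mk, Fin.append_right, hf, Fin.snoc_castSucc]
        · simp [hB', Fin.append_right, bE, Basis.coe_mk, Fin.append_left, hf, Fin.snoc_castSucc]
    have hinj : Function.Injective τ' := by
      intro x y hxy
      induction x using Fin.lastCases with
      | last =>
        induction y using Fin.lastCases with
        | last => rfl
        | cast y' =>
          exfalso
          rw [hτ'] at hxy
          simp only [Fin.snoc_last, Fin.snoc_castSucc] at hxy
          induction y' using Fin.addCases with
          | left i =>
            simp only [Fin.append_left, hA, Fin.ext_iff, Fin.coe_natAdd] at hxy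
            exact Fin.succAbove_ne a i (Fin.ext (by omega)).symm
          | right j =>
            have := j.isLt
            simp only [Fin.append_right, hB', Fin.ext_iff, Fin.coe_natAdd,
              Fin.coe_castAdd] at hxy
            omega
      | cast x' =>
        induction y using Fin.lastCases with
        | last =>
          exfalso
          rw [hτ'] at hxy
          simp only [Fin.snoc_last, Fin.snoc_castSucc] at hxy
          induction x' using Fin.addCases with
          | left i =>
            simp only [Fin.append_left, hA, Fin.ext_iff, Fin.coe_natAdd] at hxy
            exact Fin.succAbove_ne a i (Fin.ext (by omega))
          | right j =>
            have := j.isLt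
            simp only [Fin.append_right, hB', Fin.ext_iff, Fin.coe_natAdd,
              Fin.coe_castAdd] at hxy
            omega
        | cast y' =>
          rw [hτ'] at hxy
          simp only [Fin.snoc_castSucc] at hxy
          congr 1
          induction x' using Fin.addCases with
          | left i =>
            induction y' using Fin.addCases with
            | left i' =>
              simp only [Fin.append_left, hA, Fin.ext_iff, Fin.coe_natAdd] at hxy
              have : a.succAbove i = a.succAbove i' := Fin.ext (by omega)
              rw [Fin.succAbove_right_injective this]
            | right j' =>
              exfalso
              have := j'.isLt
              simp only [Fin.append_left, Fin.append_right, hA, hB', Fin.ext_iff,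
                Fin.coe_natAdd, Fin.coe_castAdd] at hxy
              omega
          | right j =>
            induction y' using Fin.addCases with
            | left i' =>
              exfalso
              have := j.isLt
              simp only [Fin.append_left, Fin.append_right, hA, hB', Fin.ext_iff,
                Fin.coe_natAdd, Fin.coe_castAdd] at hxy
              omega
            | right j' =>
              simp only [Fin.append_right, hB', Fin.ext_iff, Fin.coe_castAdd] at hxy
              congr 1
              exact Fin.ext hxy
    have hbij : Function.Bijective (fun x : Fin (k + (m + 2)) => τ' (finCongr hpn.symm x)) :=
      Finite.injective_iff_bijective.mp (hinj.comp (finCongr hpn.symm).injective)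
    refine ⟨Equiv.ofBijective _ hbij, ?_⟩
    rw [← hcomp]
    rfl
  have hnz : bE.det ((g a) ∘ (finCongr hpn.symm)) ≠ 0 := by
    obtain ⟨σ, hσ⟩ := hτ
    rw [hσ, AlternatingMap.map_perm, Basis.det_self]
    rcases Int.units_eq_one_or (Equiv.Perm.sign σ) with h | h <;>
      simp [h, Units.smul_def]
  rw [Finset.sum_eq_single a (fun t _ ht => by rw [hzero t ht, smul_zero]) (by simp)] at h3
  exact (smul_eq_zero.mp h3).resolve_right hnz
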